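/- For every integer n >= 1, the alternating sum of Eulerian numbers satisfies sum_{m=0}^{n-1} (-1)^m A(n, m) = 2^{n+1} (2^{n+1} - 1) B_{n+1} / (n+1), where B_k is the k-th Bernoulli number. -/

import Mathlib

/-- Eulerian numbers `A n m`. -/
def eulerianNumber : ℕ → ℕ → ℕ
  | 0, 0 => 1
  | 0, _ + 1 => 0
  | _ + 1, 0 => 1
  | n + 1, m + 1 => (m + 2) * eulerianNumber n (m + 1) + (n - m) * eulerianNumber n m

/-- Stirling numbers of the second kind. -/
def stir : ℕ → ℕ → ℕ
  | 0, 0 => 1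
  | 0, _ + 1 => 0
  | _ + 1, 0 => 0
  | n + 1, k + 1 => (k + 1) * stir n (k + 1) + stir n k

lemma stir_succ (n k : ℕ) : stir (n+1) (k+1) = (k + 1) * stir n (k + 1) + stir n k := rfl
lemma stir_zero (n : ℕ) : stir (n+1) 0 = 0 := rfl

lemma eul_zero (n : ℕ) : eulerianNumber n 0 = 1 := by cases n <;> rfl

lemma eul_succ (n m : ℕ) : eulerianNumber (n+1) (m+1)
    = (m + 2) * eulerianNumber n (m + 1) + (n - m) * eulerianNumber n m := rfl

lemma eul_eq_zero : ∀ n m : ℕ, n ≤ m → 1 ≤ m → eulerianNumber n m = 0 := by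
  intro n
  induction n with
  | zero => intro m h1 h2; match m, h2 with | (m+1), _ => rfl
  | succ n ih =>
    intro m h1 h2
    match m, h2 with
    | (m+1), _ =>
      show (m + 2) * eulerianNumber n (m + 1) + (n - m) * eulerianNumber n m = 0
      have h3 : n ≤ m := Nat.succ_le_succ_iff.mp h1
      rw [ih (m+1) (le_trans h3 (Nat.le_succ m)) (Nat.succ_le_succ (Nat.zero_le m)),
        Nat.sub_eq_zero_of_le h3]
      ring

lemma stir_eq_zero : ∀ n k : ℕ, n < k → stir n k = 0 := by
  intro n
  induction n with
  | zero => intro k h; match k, h with | (k+1), _ => rfl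
  | succ n ih =>
    intro k h
    match k, h with
    | (k+1), h =>
      show (k + 1) * stir n (k + 1) + stir n k = 0
      have h3 : n < k := Nat.succ_lt_succ_iff.mp h
      rw [ih (k+1) (lt_trans h3 (Nat.lt_succ_self k)), ih k h3]
      ring

section PolyPart
open Polynomial Finset


lemma per_P (n m : ℕ) (hm : m ≤ n) (a : ℚ) :
    (1 + (n:ℚ[X]) * X) * (C a * X^m) + X*(1-X) * derivative (C a * X^m)
    = ((m+1:ℕ):ℚ[X]) * (C a * X^m) + ((n-m:ℕ):ℚ[X]) * (C a * X^(m+1)) := by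
  rw [derivative_C_mul, derivative_X_pow]
  rcases m with _|m
  · simp
    ring
  · rw [Nat.cast_sub hm]
    push_cast [map_add, map_one, map_natCast]
    ring

lemma per_F (n k : ℕ) (hk : k ≤ n) (c : ℚ) :
    (1 + (n:ℚ[X]) * X) * (C c * (X-1)^(n-k)) + X*(1-X) * derivative (C c * (X-1)^(n-k))
    = ((k+1:ℕ):ℚ[X]) * (C c * (X-1)^(n-k)) + (k:ℚ[X]) * (C c * (X-1)^(n-k+1)) := by
  obtain ⟨j, rfl⟩ := Nat.exists_eq_add_of_le hk
  rw [Nat.add_sub_cancel_left, derivative_C_mul, derivative_pow]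
  rcases j with _|j
  · simp
    ring
  · simp only [Nat.add_sub_cancel, derivative_sub, derivative_X, derivative_one, sub_zero,
      mul_one, pow_succ]
    push_cast [map_add, map_one, map_natCast]
    ring

noncomputable def Pe (n : ℕ) : ℚ[X] :=
  ∑ m ∈ range (n+1), C (eulerianNumber n m : ℚ) * X ^ m

noncomputable def Fs (n : ℕ) : ℚ[X] :=
  ∑ k ∈ range (n+1), C ((Nat.factorial k * stir n k : ℕ) : ℚ) * (X - 1) ^ (n - k)


lemma shift_sum {M : Type*} [AddCommMonoid M] (f : ℕ → M) (n : ℕ) (htop : f (n+1) = 0) :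
    ∑ m ∈ range (n+1), f m = ∑ m ∈ range (n+1), f (m+1) + f 0 := by
  rw [sum_range_succ', sum_range_succ _ n, htop, add_zero]

lemma L_P (n : ℕ) :
    Pe (n+1) = (1 + (n:ℚ[X]) * X) * Pe n + X*(1-X) * derivative (Pe n) := by
  have h1 : (1 + (n:ℚ[X]) * X) * Pe n + X*(1-X) * derivative (Pe n)
      = ∑ m ∈ range (n+1), (((m+1:ℕ):ℚ[X]) * (C (eulerianNumber n m : ℚ) * X^m)
          + ((n-m:ℕ):ℚ[X]) * (C (eulerianNumber n m : ℚ) * X^(m+1))) := by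
    rw [Pe, derivative_sum, mul_sum, mul_sum, ← sum_add_distrib]
    exact sum_congr rfl fun m hm => per_P n m (Nat.lt_succ_iff.mp (mem_range.mp hm)) _
  rw [h1, sum_add_distrib]
  have h2 : ∑ m ∈ range (n+1), ((m+1:ℕ):ℚ[X]) * (C (eulerianNumber n m:ℚ) * X^m)
      = ∑ m ∈ range (n+1), ((m+1+1:ℕ):ℚ[X]) * (C (eulerianNumber n (m+1):ℚ) * X^(m+1)) + 1 := by
    have := shift_sum (fun m => ((m+1:ℕ):ℚ[X]) * (C (eulerianNumber n m:ℚ) * X^m)) n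
      (by show ((n+1+1:ℕ):ℚ[X]) * (C (eulerianNumber n (n+1):ℚ) * X^(n+1)) = 0
          rw [eul_eq_zero n (n+1) (Nat.le_succ n) (Nat.succ_le_succ (Nat.zero_le n))]; simp)
    beta_reduce at this
    rw [this]
    congr 1
    rw [eul_zero]; simp
  rw [h2]
  rw [Pe, sum_range_succ' (fun m => C (eulerianNumber (n+1) m : ℚ) * X ^ m) (n+1)]
  have h0 : C (eulerianNumber (n+1) 0 : ℚ) * X ^ 0 = 1 := by rw [eul_zero]; simp
  rw [h0]
  have h3 : ∀ m ∈ range (n+1), C (eulerianNumber (n+1) (m+1) : ℚ) * X ^ (m+1)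
      = ((m+1+1:ℕ):ℚ[X]) * (C (eulerianNumber n (m+1):ℚ) * X^(m+1))
        + ((n-m:ℕ):ℚ[X]) * (C (eulerianNumber n m : ℚ) * X^(m+1)) := by
    intro m hm
    rw [eul_succ]
    push_cast [map_add, map_mul, map_one, map_natCast, map_ofNat]
    ring
  rw [sum_congr rfl h3, sum_add_distrib]
  ring

lemma L_F (n : ℕ) :
    Fs (n+1) = (1 + (n:ℚ[X]) * X) * Fs n + X*(1-X) * derivative (Fs n) := by
  have h1 : (1 + (n:ℚ[X]) * X) * Fs n + X*(1-X) * derivative (Fs n)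
      = ∑ k ∈ range (n+1), (((k+1:ℕ):ℚ[X]) * (C ((Nat.factorial k * stir n k : ℕ):ℚ) * (X-1)^(n-k))
          + ((k:ℕ):ℚ[X]) * (C ((Nat.factorial k * stir n k : ℕ):ℚ) * (X-1)^(n-k+1))) := by
    rw [Fs, derivative_sum, mul_sum, mul_sum, ← sum_add_distrib]
    exact sum_congr rfl fun k hk => per_F n k (Nat.lt_succ_iff.mp (mem_range.mp hk)) _
  rw [h1, sum_add_distrib]
  have h2 : ∑ k ∈ range (n+1), ((k:ℕ):ℚ[X]) * (C ((Nat.factorial k * stir n k : ℕ):ℚ) * (X-1)^(n-k+1))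
      = ∑ k ∈ range (n+1), ((k+1:ℕ):ℚ[X]) * (C ((Nat.factorial (k+1) * stir n (k+1) : ℕ):ℚ) * (X-1)^(n-k)) := by
    rw [sum_range_succ' (fun k => ((k:ℕ):ℚ[X]) * (C ((Nat.factorial k * stir n k : ℕ):ℚ) * (X-1)^(n-k+1))) n]
    rw [sum_range_succ (fun k => ((k+1:ℕ):ℚ[X]) * (C ((Nat.factorial (k+1) * stir n (k+1) : ℕ):ℚ) * (X-1)^(n-k))) n]
    have htop : ((n+1:ℕ):ℚ[X]) * (C ((Nat.factorial (n+1) * stir n (n+1) : ℕ):ℚ) * (X-1)^(n-n)) = 0 := by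
      rw [stir_eq_zero n (n+1) (Nat.lt_succ_self n)]; simp
    rw [htop, add_zero]
    have h00 : ((0:ℕ):ℚ[X]) * (C ((Nat.factorial 0 * stir n 0 : ℕ):ℚ) * (X-1)^(n-0+1)) = 0 := by
      simp
    rw [h00, add_zero]
    refine sum_congr rfl fun k hk => ?_
    have he : n - (k+1) + 1 = n - k := by have := mem_range.mp hk; omega
    rw [he]
  rw [h2]
  rw [Fs, sum_range_succ' (fun k => C ((Nat.factorial k * stir (n+1) k : ℕ):ℚ) * (X-1)^(n+1-k)) (n+1)]
  have h0 : C ((Nat.factorial 0 * stir (n+1) 0 : ℕ):ℚ) * (X-1)^(n+1-0) = 0 := by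
    show C ((Nat.factorial 0 * stir (n+1) 0 : ℕ):ℚ) * (X-1)^(n+1) = 0
    rw [show stir (n+1) 0 = 0 from rfl]; simp
  rw [h0, add_zero]
  have h3 : ∀ k ∈ range (n+1), C ((Nat.factorial (k+1) * stir (n+1) (k+1) : ℕ):ℚ) * (X-1)^(n+1-(k+1))
      = ((k+1:ℕ):ℚ[X]) * (C ((Nat.factorial k * stir n k : ℕ):ℚ) * (X-1)^(n-k))
        + ((k+1:ℕ):ℚ[X]) * (C ((Nat.factorial (k+1) * stir n (k+1) : ℕ):ℚ) * (X-1)^(n-k)) := by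
    intro k hk
    rw [Nat.succ_sub_succ, stir_succ, Nat.factorial_succ]
    push_cast [map_add, map_mul, map_one, map_natCast, map_ofNat]
    ring
  rw [sum_congr rfl h3, sum_add_distrib]

lemma Pe_eq_Fs (n : ℕ) : Pe n = Fs n := by
  induction n with
  | zero => simp [Pe, Fs, eulerianNumber, stir]
  | succ n ih => rw [L_P, L_F, ih]

lemma eval_PeFs (n : ℕ) :
    ∑ m ∈ range (n+1), (-1:ℚ)^m * (eulerianNumber n m : ℚ)
    = ∑ k ∈ range (n+1), ((Nat.factorial k * stir n k : ℕ) : ℚ) * (-2:ℚ)^(n-k) := by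
  have h := congrArg (Polynomial.eval (-1:ℚ)) (Pe_eq_Fs n)
  rw [Pe, Fs, Polynomial.eval_finset_sum, Polynomial.eval_finset_sum] at h
  calc ∑ m ∈ range (n+1), (-1:ℚ)^m * (eulerianNumber n m : ℚ)
      = ∑ m ∈ range (n+1), Polynomial.eval (-1:ℚ) (Polynomial.C (eulerianNumber n m : ℚ) * Polynomial.X ^ m) := by
        refine sum_congr rfl fun m hm => ?_
        simp [mul_comm]
    _ = ∑ k ∈ range (n+1), Polynomial.eval (-1:ℚ)
          (Polynomial.C ((Nat.factorial k * stir n k : ℕ) : ℚ) * (Polynomial.X - 1) ^ (n-k)) := h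
    _ = ∑ k ∈ range (n+1), ((Nat.factorial k * stir n k : ℕ) : ℚ) * (-2:ℚ)^(n-k) := by
        refine sum_congr rfl fun k hk => ?_
        simp
        norm_num

end PolyPart

section SigPart
open Finset
lemma ST1 : ∀ n k : ℕ, (stir (n+1) (k+1) : ℚ) = ∑ j ∈ range (n+1), (n.choose j : ℚ) * stir j k := by
  intro n
  induction n with
  | zero =>
    intro k
    rw [sum_range_one, stir_succ, stir_eq_zero 0 (k+1) (Nat.succ_pos k)]
    simp
  | succ n ih =>
    intro k
    rw [sum_range_succ' (fun j => ((n+1).choose j : ℚ) * stir j k) (n+1)]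
    have hpas : ∀ j ∈ range (n+1), (((n+1).choose (j+1) : ℕ) : ℚ) * stir (j+1) k
        = (n.choose j : ℚ) * stir (j+1) k + (n.choose (j+1) : ℚ) * stir (j+1) k := by
      intro j hj
      rw [Nat.choose_succ_succ]
      push_cast
      ring
    rw [sum_congr rfl hpas, sum_add_distrib]
    have hb : ∑ j ∈ range (n+1), (n.choose (j+1) : ℚ) * stir (j+1) k
        + (((n+1).choose 0 : ℕ) : ℚ) * stir 0 k = stir (n+1) (k+1) := by
      rw [sum_range_succ]
      rw [Nat.choose_succ_self]
      rw [ih k, sum_range_succ' (fun j => (n.choose j : ℚ) * stir j k) n]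
      simp
    rcases k with _ | k
    · have hz : ∀ j ∈ range (n+1), (n.choose j : ℚ) * stir (j+1) 0 = 0 := by
        intro j hj; rw [stir_zero]; simp
      rw [sum_congr rfl hz, sum_const_zero]
      rw [stir_succ (n+1) 0, stir_zero n]
      push_cast
      norm_num at hb ⊢
      linarith [hb]
    · have hx : ∀ j ∈ range (n+1), (n.choose j : ℚ) * stir (j+1) (k+1)
          = ((k:ℚ)+1) * ((n.choose j : ℚ) * stir j (k+1)) + (n.choose j : ℚ) * stir j k := by
        intro j hj; rw [stir_succ]; push_cast; ring
      rw [sum_congr rfl hx, sum_add_distrib, ← mul_sum, ← ih, ← ih]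
      rw [stir_succ (n+1) (k+1)]
      push_cast
      linarith [hb]


noncomputable def sig (n : ℕ) : ℚ :=
  ∑ k ∈ range (n+1), (Nat.factorial k * stir n k : ℕ) * (-1/2:ℚ)^k

lemma sig_zero : sig 0 = 1 := by simp [sig, stir]

lemma sig_ext (n j : ℕ) (hj : j ≤ n) :
    sig j = ∑ k ∈ range (n+1), ((Nat.factorial k * stir j k : ℕ) : ℚ) * (-1/2:ℚ)^k := by
  rw [sig]
  refine sum_subset (by intro x hx; rw [mem_range] at *; omega) ?_
  intro k hk hk2
  rw [mem_range] at hk hk2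
  rw [stir_eq_zero j k (by omega)]
  simp

lemma Rsig (n : ℕ) (hn : 1 ≤ n) :
    ∑ j ∈ range (n+1), (n.choose j : ℚ) * sig j = - sig n := by
  obtain ⟨n', rfl⟩ : ∃ m, n = m + 1 := ⟨n - 1, by omega⟩
  set n := n' + 1 with hndef
  have h1 : ∑ j ∈ range (n+1), (n.choose j : ℚ) * sig j
      = ∑ k ∈ range (n+1), ((-1/2:ℚ)^k * (Nat.factorial k : ℚ) * (stir (n+1) (k+1) : ℚ)) := by
    have : ∀ j ∈ range (n+1), (n.choose j : ℚ) * sig j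
        = ∑ k ∈ range (n+1), (n.choose j : ℚ) * (((Nat.factorial k * stir j k : ℕ) : ℚ) * (-1/2:ℚ)^k) := by
      intro j hj
      rw [sig_ext n j (Nat.lt_succ_iff.mp (mem_range.mp hj)), mul_sum]
    rw [sum_congr rfl this, sum_comm]
    refine sum_congr rfl fun k hk => ?_
    rw [ST1 n k, mul_sum]
    refine sum_congr rfl fun j hj => ?_
    push_cast
    ring
  rw [h1]
  have h2 : ∀ k ∈ range (n+1), (-1/2:ℚ)^k * (Nat.factorial k : ℚ) * (stir (n+1) (k+1) : ℚ)
      = ((Nat.factorial (k+1) * stir n (k+1) : ℕ) : ℚ) * (-1/2:ℚ)^k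
        + ((Nat.factorial k * stir n k : ℕ) : ℚ) * (-1/2:ℚ)^k := by
    intro k hk
    rw [stir_succ, Nat.factorial_succ]
    push_cast
    ring
  rw [sum_congr rfl h2, sum_add_distrib]
  have h3 : ∑ k ∈ range (n+1), ((Nat.factorial (k+1) * stir n (k+1) : ℕ) : ℚ) * (-1/2:ℚ)^k
      = -2 * sig n := by
    rw [sum_range_succ, stir_eq_zero n (n+1) (Nat.lt_succ_self n)]
    rw [sig, sum_range_succ' (fun k => ((Nat.factorial k * stir n k : ℕ) : ℚ) * (-1/2:ℚ)^k) n]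
    rw [hndef, stir_zero]
    simp only [Nat.mul_zero, Nat.cast_zero, zero_mul, mul_zero, add_zero]
    rw [mul_sum]
    refine sum_congr rfl fun k hk => ?_
    push_cast
    ring
  rw [h3, sig]
  ring

end SigPart

section BernoulliPart
open Finset PowerSeries
noncomputable def bq (n : ℕ) : ℚ := 2^(n+1) * (2^(n+1)-1) * _root_.bernoulli (n+1) / (n+1)

noncomputable def Bser : ℚ⟦X⟧ := PowerSeries.mk fun n => bq n / n.factorial

lemma claim0 : (X : ℚ⟦X⟧) * Bser
    = rescale (4:ℚ) (bernoulliPowerSeries ℚ) - rescale (2:ℚ) (bernoulliPowerSeries ℚ) := by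
  ext n
  rw [map_sub, coeff_rescale, coeff_rescale]
  rcases n with _ | n
  · simp
  · rw [PowerSeries.coeff_succ_X_mul, Bser, coeff_mk]
    have h4 : (4:ℚ)^(n+1) = 2^(n+1) * 2^(n+1) := by rw [← mul_pow]; norm_num
    have hfac : (Nat.factorial (n+1) : ℚ) = (n+1) * Nat.factorial n := by
      rw [Nat.factorial_succ]; push_cast; ring
    rw [bq, h4, bernoulliPowerSeries, coeff_mk, hfac]
    have h1 : (Nat.factorial n : ℚ) ≠ 0 := Nat.cast_ne_zero.mpr (Nat.factorial_ne_zero n)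
    have h2 : ((n:ℚ)+1) ≠ 0 := by positivity
    simp only [Algebra.algebraMap_self, RingHom.id_apply]
    field_simp

lemma rescale_zero_exp : rescale (0:ℚ) (exp ℚ) = 1 := by
  ext n
  rw [coeff_rescale]
  rcases n with _ | n
  · simp
  · simp [coeff_exp]

lemma claim1 : Bser * (rescale (-2:ℚ) (exp ℚ) + 1) = (C (-2:ℚ)) * rescale (-2:ℚ) (exp ℚ) := by
  set E2 := rescale (2:ℚ) (exp ℚ)
  set E4 := rescale (4:ℚ) (exp ℚ)
  set Em2 := rescale (-2:ℚ) (exp ℚ)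
  set R4 := rescale (4:ℚ) (bernoulliPowerSeries ℚ)
  set R2 := rescale (2:ℚ) (bernoulliPowerSeries ℚ)
  have hA : E2 * E2 = E4 := by
    rw [exp_mul_exp_eq_exp_add]; norm_num; rfl
  have hB : Em2 * E2 = 1 := by
    rw [exp_mul_exp_eq_exp_add]; norm_num [rescale_zero_exp]
  have hC : R4 * (E4 - 1) = (C (4:ℚ)) * X := by
    have := congrArg (rescale (4:ℚ)) (bernoulliPowerSeries_mul_exp_sub_one ℚ)
    rw [map_mul, map_sub, map_one, rescale_X] at this
    exact this
  have hD : R2 * (E2 - 1) = (C (2:ℚ)) * X := by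
    have := congrArg (rescale (2:ℚ)) (bernoulliPowerSeries_mul_exp_sub_one ℚ)
    rw [map_mul, map_sub, map_one, rescale_X] at this
    exact this
  have hC4 : (C (4:ℚ)) * X = 4 * X := by rw [map_ofNat]
  have hC2 : (C (2:ℚ)) * X = 2 * X := by rw [map_ofNat]
  rw [hC4] at hC; rw [hC2] at hD
  have hX : (X:ℚ⟦X⟧) ≠ 0 := X_ne_zero
  have hE2 : E2 ≠ 0 := by
    intro h
    have := congrArg (constantCoeff) h
    simp [E2, rescale, exp] at this
  have hE21 : E2 - 1 ≠ 0 := by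
    intro h
    have := congrArg (coeff 1) h
    rw [map_sub] at this
    simp [E2, coeff_rescale, coeff_exp] at this
  have key : ((X:ℚ⟦X⟧) * Bser * (Em2 + 1)) * (E2 * (E2 - 1))
      = ((C (-2:ℚ)) * X * Em2) * (E2 * (E2 - 1)) := by
    rw [claim0]
    have hCm2 : (C (-2:ℚ)) = -2 := by rw [map_neg, map_ofNat]
    rw [hCm2]
    linear_combination ((R4-R2)*(E2-1) + 2*X*(E2-1)) * hB + R4 * hA + hC - (E2+1) * hD
  have key2 : (X:ℚ⟦X⟧) * (Bser * (Em2 + 1)) = X * ((C (-2:ℚ)) * Em2) := by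
    have h := mul_right_cancel₀ (mul_ne_zero hE2 hE21) key
    calc (X:ℚ⟦X⟧) * (Bser * (Em2 + 1)) = X * Bser * (Em2 + 1) := by ring
    _ = (C (-2:ℚ)) * X * Em2 := h
    _ = X * ((C (-2:ℚ)) * Em2) := by ring
  exact mul_left_cancel₀ hX key2

lemma Rb (n : ℕ) : ∑ j ∈ range (n+1), (n.choose j : ℚ) * ((-2:ℚ)^(n-j) * bq j)
    = -2*(-2)^n - bq n := by
  have h := congrArg (coeff n) claim1
  rw [mul_add, mul_one, map_add, coeff_mul,
    Finset.Nat.sum_antidiagonal_eq_sum_range_succ_mk, coeff_C_mul, coeff_rescale, coeff_exp] at h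
  simp only [Bser, coeff_mk, coeff_rescale, coeff_exp, Algebra.algebraMap_self,
    RingHom.id_apply] at h
  have hn : (Nat.factorial n : ℚ) ≠ 0 := Nat.cast_ne_zero.mpr (Nat.factorial_ne_zero n)
  have hsum : ∑ j ∈ range (n+1), (n.choose j : ℚ) * ((-2:ℚ)^(n-j) * bq j)
      = ∑ j ∈ range (n+1),
        (Nat.factorial n : ℚ) * (bq j / (Nat.factorial j) * ((-2:ℚ)^(n-j) * (1/(Nat.factorial (n-j))))) := by
    refine sum_congr rfl fun j hj => ?_
    have hj' : j ≤ n := Nat.lt_succ_iff.mp (mem_range.mp hj)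
    rw [Nat.cast_choose ℚ hj']
    have h1 : (Nat.factorial j : ℚ) ≠ 0 := Nat.cast_ne_zero.mpr (Nat.factorial_ne_zero j)
    have h2 : (Nat.factorial (n-j) : ℚ) ≠ 0 := Nat.cast_ne_zero.mpr (Nat.factorial_ne_zero (n-j))
    field_simp
    try ring
    try simp
  have hS : ∑ j ∈ range (n+1),
      (bq j / (Nat.factorial j) * ((-2:ℚ)^(n-j) * (1/(Nat.factorial (n-j)))))
      = -2 * ((-2)^n * (1/(Nat.factorial n))) - bq n / (Nat.factorial n) := by
    linarith [h]
  rw [hsum, ← mul_sum, hS]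
  field_simp

end BernoulliPart

section GluePart
open Finset

lemma sum_eq_sig (n : ℕ) :
    ∑ k ∈ range (n+1), ((Nat.factorial k * stir n k : ℕ) : ℚ) * (-2:ℚ)^(n-k)
    = (-2:ℚ)^n * sig n := by
  rw [sig, mul_sum]
  refine sum_congr rfl fun k hk => ?_
  have hk' : k ≤ n := Nat.lt_succ_iff.mp (mem_range.mp hk)
  have hpow : (-2:ℚ)^(n-k) = (-2:ℚ)^n * (-1/2:ℚ)^k := by
    have h1 : (-2:ℚ)^(n-k) * (-2:ℚ)^k = (-2:ℚ)^n := by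
      rw [← pow_add]
      congr 1
      omega
    have h2 : ((-2:ℚ)*(-1/2))^k = 1 := by norm_num
    calc (-2:ℚ)^(n-k) = (-2:ℚ)^(n-k) * (((-2:ℚ)*(-1/2))^k) := by rw [h2]; ring
      _ = ((-2:ℚ)^(n-k) * (-2:ℚ)^k) * (-1/2:ℚ)^k := by rw [mul_pow]; ring
      _ = (-2:ℚ)^n * (-1/2:ℚ)^k := by rw [h1]
  rw [hpow]
  ring

lemma bq_zero : bq 0 = -1 := by
  norm_num [bq, bernoulli_one]

lemma glue_sig_bq : ∀ n : ℕ, 1 ≤ n → (-2:ℚ)^n * sig n = bq n := by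
  intro n
  induction n using Nat.strong_induction_on with
  | _ n ih =>
    intro hn
    obtain ⟨m, rfl⟩ : ∃ m, n = m + 1 := ⟨n - 1, by omega⟩
    have e1 : ∑ j ∈ range (m+1+1), ((m+1).choose j : ℚ) * ((-2:ℚ)^(m+1-j) * ((-2:ℚ)^j * sig j))
        = -((-2:ℚ)^(m+1) * sig (m+1)) := by
      have h0 := Rsig (m+1) (by omega)
      have : ∀ j ∈ range (m+1+1), ((m+1).choose j : ℚ) * ((-2:ℚ)^(m+1-j) * ((-2:ℚ)^j * sig j))
          = (-2:ℚ)^(m+1) * (((m+1).choose j : ℚ) * sig j) := by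
        intro j hj
        have hj' : j ≤ m+1 := Nat.lt_succ_iff.mp (mem_range.mp hj)
        have h1 : (-2:ℚ)^(m+1-j) * (-2:ℚ)^j = (-2:ℚ)^(m+1) := by
          rw [← pow_add]; congr 1; omega
        calc ((m+1).choose j : ℚ) * ((-2:ℚ)^(m+1-j) * ((-2:ℚ)^j * sig j))
            = ((-2:ℚ)^(m+1-j) * (-2:ℚ)^j) * (((m+1).choose j : ℚ) * sig j) := by ring
          _ = (-2:ℚ)^(m+1) * (((m+1).choose j : ℚ) * sig j) := by rw [h1]
      rw [sum_congr rfl this, ← mul_sum, h0]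
      ring
    have e2 := Rb (m+1)
    rw [sum_range_succ] at e1 e2
    simp only [Nat.choose_self, Nat.sub_self, pow_zero, Nat.cast_one, one_mul] at e1 e2
    rw [sum_range_succ'] at e1 e2
    simp only [Nat.choose_zero_right, Nat.sub_zero, Nat.cast_one, one_mul, pow_zero,
      sig_zero, bq_zero, mul_one] at e1 e2
    have hmid : ∑ k ∈ range m, (((m+1).choose (k+1)) : ℚ) * ((-2:ℚ)^(m+1-(k+1)) * ((-2:ℚ)^(k+1) * sig (k+1)))
        = ∑ k ∈ range m, (((m+1).choose (k+1)) : ℚ) * ((-2:ℚ)^(m+1-(k+1)) * bq (k+1)) := by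
      refine sum_congr rfl fun k hk => ?_
      have hk' : k < m := mem_range.mp hk
      rw [ih (k+1) (by omega) (by omega)]
    rw [hmid] at e1
    linarith [e1, e2]

end GluePart

/-- the alternating sum of the Eulerian numbers equals
`2^(n+1) (2^(n+1) - 1) B_{n+1} / (n+1)` for `n ≥ 1`. -/
theorem alternating_sum_eulerian (n : ℕ) (hn : 1 ≤ n) :
    ∑ m ∈ Finset.range n, (-1 : ℚ) ^ m * (eulerianNumber n m : ℚ) =
      2 ^ (n + 1) * (2 ^ (n + 1) - 1) * bernoulli (n + 1) / (n + 1) := by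
  have hext : ∑ m ∈ Finset.range n, (-1 : ℚ) ^ m * (eulerianNumber n m : ℚ)
      = ∑ m ∈ Finset.range (n+1), (-1 : ℚ) ^ m * (eulerianNumber n m : ℚ) := by
    rw [Finset.sum_range_succ, eul_eq_zero n n le_rfl hn]
    simp
  rw [hext, eval_PeFs, sum_eq_sig, glue_sig_bq n hn, bq]
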